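/- Let p be a prime, m ≥ 1, and A a commutative ring with p^m · A = 0. Let I ⊆ A be an ideal containing p and equipped with a divided power structure, and set R := A/I (a ring of characteristic p). Then the map W_m(R) → A sending a truncated Witt vector (r_0, …, r_{m−1}) to Σ_{i=0}^{m−1} p^i · (r̂_i)^{p^{m−i}}, where r̂_i ∈ A is any element whose residue in R is r_i, is independent of the choice of the lifts r̂_i and defines a ring homomorphism θ : W_m(R) → A. Moreover, if the Frobenius endomorphism of R is surjective, then θ is the unique ring homomorphism W_m(R) → A whose composite with the projection A → R sends (r_0, …, r_{m−1}) to r_0^(p^m). -/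

import Mathlib

open Finset Function

section Aux

variable {p m : ℕ} [hp : Fact p.Prime] {A : Type*} [CommRing A]

private lemma st1_key (hpm : (p : A) ^ m = 0) {I : Ideal A} (hI : DividedPowers I)
    {i : ℕ} (him : i ≤ m) {f g : A} (hfg : f - g ∈ I) :
    (p : A) ^ i * f ^ p ^ (m - i) = (p : A) ^ i * g ^ p ^ (m - i) := by
  have hpn : (p : A) ^ i * ((p ^ (m - i) : ℕ) : A) = 0 := by
    rw [Nat.cast_pow, ← pow_add, Nat.add_sub_cancel' him, hpm]
  have hf : f = (f - g) + g := by ring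
  rw [hf, add_pow, Finset.mul_sum,
    Finset.sum_eq_single_of_mem 0 (Finset.mem_range.2 (Nat.succ_pos _))]
  · simp
  · intro b _ hb0
    obtain ⟨b, rfl⟩ := Nat.exists_eq_succ_of_ne_zero hb0
    obtain ⟨n', hn'⟩ : ∃ n', p ^ (m - i) = n' + 1 :=
      ⟨p ^ (m - i) - 1, (Nat.succ_pred_eq_of_pos (Nat.pow_pos hp.out.pos)).symm⟩
    have hx : (f - g) ^ (b + 1) = (((b + 1).factorial : ℕ) : A) * hI.dpow (b + 1) (f - g) :=
      (hI.factorial_mul_dpow_eq_pow hfg).symm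
    have hnat : (b + 1).factorial * (p ^ (m - i)).choose (b + 1)
        = p ^ (m - i) * n'.descFactorial b := by
      rw [← Nat.descFactorial_eq_factorial_mul_choose, hn', Nat.succ_descFactorial_succ]
    have h2 : (p : A) ^ i * ((((b + 1).factorial : ℕ) : A)
        * (((p ^ (m - i)).choose (b + 1) : ℕ) : A)) = 0 := by
      rw [← Nat.cast_mul, hnat, Nat.cast_mul, ← mul_assoc, hpn, zero_mul]
    rw [hx]
    linear_combination (hI.dpow (b + 1) (f - g) * g ^ (p ^ (m - i) - (b + 1))) * h2

variable {R : Type*} [CommRing R]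

private lemma st1_viter_coeff (y : WittVector p R) :
    ∀ (k j : ℕ), j < k → (WittVector.verschiebung^[k] y).coeff j = 0 := by
  intro k
  induction k with
  | zero => intro j hj; exact absurd hj (Nat.not_lt_zero j)
  | succ k ih =>
    intro j hj
    rw [Function.iterate_succ_apply']
    cases j with
    | zero => exact WittVector.verschiebung_coeff_zero _
    | succ j =>
      rw [WittVector.verschiebung_coeff_succ]
      exact ih j (by omega)

private lemma st1_viter_add (k : ℕ) (a b : WittVector p R) :
    WittVector.verschiebung^[k] (a + b)
      = WittVector.verschiebung^[k] a + WittVector.verschiebung^[k] b := by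
  induction k generalizing a b with
  | zero => rfl
  | succ k ih =>
    rw [Function.iterate_succ_apply, map_add, ih, ← Function.iterate_succ_apply,
      ← Function.iterate_succ_apply]

private lemma st1_decomp (k : ℕ) (x : WittVector p R) :
    ∃ (c : ℕ → R) (y : WittVector p R),
      x = (∑ i ∈ Finset.range k,
        WittVector.verschiebung^[i] (WittVector.teichmuller p (c i)))
        + WittVector.verschiebung^[k] y := by
  induction k with
  | zero => exact ⟨fun _ => 0, x, by simp⟩
  | succ k ih =>
    obtain ⟨c, y, rfl⟩ := ih
    set z := y - WittVector.teichmuller p (y.coeff 0) with hz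
    have hz0 : z.coeff 0 = 0 := by
      have h := map_sub (WittVector.constantCoeff (p := p) (R := R)) y
        (WittVector.teichmuller p (y.coeff 0))
      simp only [WittVector.constantCoeff_apply, WittVector.teichmuller_coeff_zero] at h
      rw [hz, h, sub_self]
    have hzv : z = WittVector.verschiebung (WittVector.mk p fun n => z.coeff (n + 1)) := by
      apply WittVector.ext
      intro n
      cases n with
      | zero => rw [WittVector.verschiebung_coeff_zero, hz0]
      | succ n =>
        rw [WittVector.verschiebung_coeff_succ, WittVector.coeff_mk]
    have hy : y = WittVector.teichmuller p (y.coeff 0)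
        + WittVector.verschiebung (WittVector.mk p fun n => z.coeff (n + 1)) := by
      rw [← hzv, hz]; ring
    refine ⟨Function.update c k (y.coeff 0),
      WittVector.mk p fun n => z.coeff (n + 1), ?_⟩
    simp only [Finset.sum_range_succ, Function.update_self]
    have hss : (∑ i ∈ Finset.range k, WittVector.verschiebung^[i]
          (WittVector.teichmuller p (Function.update c k (y.coeff 0) i)))
        = ∑ i ∈ Finset.range k,
          WittVector.verschiebung^[i] (WittVector.teichmuller p (c i)) :=
      Finset.sum_congr rfl fun i hi => by
        rw [Function.update_of_ne (Finset.mem_range.1 hi).ne]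
    rw [hss, add_assoc]
    congr 1
    conv_lhs => rw [hy]
    rw [st1_viter_add, Function.iterate_succ_apply]

private lemma st1_frob_teich [CharP R p] (k : ℕ) (t : R) :
    WittVector.frobenius^[k] (WittVector.teichmuller p t)
      = WittVector.teichmuller p (t ^ p ^ k) := by
  induction k with
  | zero => simp
  | succ k ih =>
    rw [Function.iterate_succ_apply', ih]
    apply WittVector.ext
    intro n
    rw [WittVector.coeff_frobenius_charP]
    cases n with
    | zero =>
      rw [WittVector.teichmuller_coeff_zero, WittVector.teichmuller_coeff_zero,
        ← pow_mul, ← pow_succ]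
    | succ n =>
      rw [WittVector.teichmuller_coeff_pos p _ _ (Nat.succ_pos n),
        WittVector.teichmuller_coeff_pos p _ _ (Nat.succ_pos n),
        zero_pow hp.out.ne_zero]

private lemma st1_vf [CharP R p] (k : ℕ) (x : WittVector p R) :
    WittVector.verschiebung^[k] (WittVector.frobenius^[k] x) = p ^ k • x := by
  induction k generalizing x with
  | zero => simp
  | succ k ih =>
    rw [Function.iterate_succ_apply' (f := ⇑(WittVector.verschiebung (p := p) (R := R))),
      Function.iterate_succ_apply (f := ⇑(WittVector.frobenius (p := p) (R := R))),
      ih, map_nsmul, WittVector.verschiebung_frobenius, pow_succ, mul_smul]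
    simp only [nsmul_eq_mul]
    ring

private lemma st1_pow_surj (hs : Function.Surjective fun x : R => x ^ p) (k : ℕ) :
    Function.Surjective fun x : R => x ^ p ^ k := by
  induction k with
  | zero => intro r; exact ⟨r, by simp⟩
  | succ k ih =>
    intro r
    obtain ⟨s, hs'⟩ := hs r
    obtain ⟨u, hu⟩ := ih s
    refine ⟨u, ?_⟩
    simp only at hs' hu ⊢
    rw [pow_succ, pow_mul, hu, hs']

end Aux

/-- Let `p` be a prime, `m ≥ 1`, and `A` a commutative ring with
`p ^ m • A = 0`.  Let `I ⊆ A` be an ideal containing `p` equipped with a divided power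
structure, and set `R := A ⧸ I`.  Then there is a (necessarily unique) ring homomorphism
`θ : W_m(R) →+* A` such that for every truncated Witt vector `w` and every choice of
lifts `f i ∈ A` of the coefficients `w.coeff i`, one has
`θ w = ∑ i, p ^ i * (f i) ^ (p ^ (m - i))` (in particular the latter expression is
independent of the choice of the lifts and defines a ring homomorphism);  moreover, if
the Frobenius endomorphism of `R` is surjective, then `θ` is the unique ring homomorphism
`W_m(R) →+* A` whose composite with the projection `A → R` sends
`(r_0, …, r_{m-1})` to `r_0 ^ (p ^ m)`. -/
theorem statement1 (p : ℕ) [Fact p.Prime] (m : ℕ) (hm : 1 ≤ m)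
    (A : Type*) [CommRing A] (hpm : (p : A) ^ m = 0)
    (I : Ideal A) (hpI : (p : A) ∈ I) (hI : DividedPowers I) :
    ∃ θ : TruncatedWittVector p m (A ⧸ I) →+* A,
      (∀ (w : TruncatedWittVector p m (A ⧸ I)) (f : Fin m → A),
          (∀ i, Ideal.Quotient.mk I (f i) = w.coeff i) →
          θ w = ∑ i : Fin m, (p : A) ^ (i : ℕ) * f i ^ p ^ (m - (i : ℕ))) ∧
      ((Function.Surjective fun x : A ⧸ I => x ^ p) →
        (∀ w : TruncatedWittVector p m (A ⧸ I),
            Ideal.Quotient.mk I (θ w) = w.coeff ⟨0, hm⟩ ^ p ^ m) ∧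
        ∀ θ' : TruncatedWittVector p m (A ⧸ I) →+* A,
          (∀ w : TruncatedWittVector p m (A ⧸ I),
              Ideal.Quotient.mk I (θ' w) = w.coeff ⟨0, hm⟩ ^ p ^ m) → θ' = θ) := by
  classical
  let π : WittVector p A →+* TruncatedWittVector p m (A ⧸ I) :=
    (WittVector.truncate m).comp (WittVector.map (Ideal.Quotient.mk I))
  have hπcoeff : ∀ (x : WittVector p A) (i : Fin m),
      (π x).coeff i = Ideal.Quotient.mk I (x.coeff i) := fun x i => by
    simp only [π, RingHom.comp_apply, WittVector.coeff_truncate, WittVector.map_coeff]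
  have hπ : Function.Surjective π := by
    intro w
    refine ⟨WittVector.mk p (fun n => if h : n < m
      then surjInv Ideal.Quotient.mk_surjective (w.coeff ⟨n, h⟩) else 0), ?_⟩
    apply TruncatedWittVector.ext
    intro i
    rw [hπcoeff, WittVector.coeff_mk, dif_pos i.isLt]
    exact surjInv_eq Ideal.Quotient.mk_surjective _
  let G : WittVector p A →+* A := WittVector.ghostComponent m
  have hkey2 : ∀ x y : WittVector p A, π x = π y → G x = G y := by
    intro x y h
    simp only [G, WittVector.ghostComponent_apply, aeval_wittPolynomial]
    refine Finset.sum_congr rfl fun i hi => ?_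
    rw [Finset.mem_range, Nat.lt_succ_iff] at hi
    by_cases him : i = m
    · subst him
      rw [hpm, zero_mul, zero_mul]
    · have hlt : i < m := lt_of_le_of_ne hi him
      have hc := congrArg (fun w => TruncatedWittVector.coeff ⟨i, hlt⟩ w) h
      simp only [hπcoeff] at hc
      exact st1_key hpm hI hi (Ideal.Quotient.eq.mp hc)
  let θ : TruncatedWittVector p m (A ⧸ I) →+* A :=
  { toFun := fun w => G (surjInv hπ w)
    map_one' := by
      show G (surjInv hπ 1) = 1
      rw [hkey2 _ 1 (by rw [surjInv_eq hπ, map_one]), map_one]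
    map_zero' := by
      show G (surjInv hπ 0) = 0
      rw [hkey2 _ 0 (by rw [surjInv_eq hπ, map_zero]), map_zero]
    map_mul' := fun a b => by
      show G (surjInv hπ (a * b)) = G (surjInv hπ a) * G (surjInv hπ b)
      rw [hkey2 (surjInv hπ (a * b)) (surjInv hπ a * surjInv hπ b)
        (by rw [map_mul, surjInv_eq hπ, surjInv_eq hπ, surjInv_eq hπ]), map_mul]
    map_add' := fun a b => by
      show G (surjInv hπ (a + b)) = G (surjInv hπ a) + G (surjInv hπ b)
      rw [hkey2 (surjInv hπ (a + b)) (surjInv hπ a + surjInv hπ b)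
        (by rw [map_add, surjInv_eq hπ, surjInv_eq hπ, surjInv_eq hπ]), map_add] }
  have hθ : ∀ w, θ w = G (surjInv hπ w) := fun _ => rfl
  have hP1 : ∀ (w : TruncatedWittVector p m (A ⧸ I)) (f : Fin m → A),
      (∀ i, Ideal.Quotient.mk I (f i) = w.coeff i) →
      θ w = ∑ i : Fin m, (p : A) ^ (i : ℕ) * f i ^ p ^ (m - (i : ℕ)) := by
    intro w f hf
    rw [hθ]
    simp only [G, WittVector.ghostComponent_apply, aeval_wittPolynomial]
    rw [Finset.sum_range_succ, hpm, zero_mul, add_zero, Finset.sum_range]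
    refine Finset.sum_congr rfl fun i _ => ?_
    refine st1_key hpm hI i.isLt.le (Ideal.Quotient.eq.mp ?_)
    rw [← hπcoeff (surjInv hπ w) i, surjInv_eq hπ, hf]
  have hP2a : ∀ w : TruncatedWittVector p m (A ⧸ I),
      Ideal.Quotient.mk I (θ w) = w.coeff ⟨0, hm⟩ ^ p ^ m := by
    intro w
    have hf : ∀ i : Fin m, Ideal.Quotient.mk I
        (surjInv Ideal.Quotient.mk_surjective (w.coeff i)) = w.coeff i :=
      fun i => surjInv_eq Ideal.Quotient.mk_surjective _
    rw [hP1 w _ hf, map_sum,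
      Finset.sum_eq_single_of_mem (⟨0, hm⟩ : Fin m) (Finset.mem_univ _)]
    · have h0 : ((⟨0, hm⟩ : Fin m) : ℕ) = 0 := rfl
      rw [h0, pow_zero, one_mul, Nat.sub_zero, map_pow, hf]
    · intro b _ hb
      have hb0 : (b : ℕ) ≠ 0 := fun h => hb (Fin.ext h)
      rw [map_mul, map_pow, Ideal.Quotient.eq_zero_iff_mem.2 hpI, zero_pow hb0, zero_mul]
  refine ⟨θ, hP1, fun hs => ⟨hP2a, fun θ' hθ' => ?_⟩⟩
  rcases subsingleton_or_nontrivial (A ⧸ I) with hsub | hnt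
  · ext w
    have hw : w = 0 := TruncatedWittVector.ext fun i => Subsingleton.elim _ _
    rw [hw, map_zero, map_zero]
  · haveI : CharP (A ⧸ I) p := (CharP.charP_iff_prime_eq_zero Fact.out).2 (by
      rw [show ((p : ℕ) : A ⧸ I) = Ideal.Quotient.mk I ((p : ℕ) : A) from
        (map_natCast _ p).symm, Ideal.Quotient.eq_zero_iff_mem]
      exact hpI)
    apply RingHom.ext
    intro w
    obtain ⟨x, rfl⟩ := WittVector.truncate_surjective (p := p) m (A ⧸ I) w
    obtain ⟨c, y, rfl⟩ := st1_decomp m x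
    have htrunc0 : WittVector.truncate m (WittVector.verschiebung^[m] y)
        = (0 : TruncatedWittVector p m (A ⧸ I)) := by
      apply TruncatedWittVector.ext
      intro i
      rw [WittVector.coeff_truncate, st1_viter_coeff y m i i.isLt,
        TruncatedWittVector.coeff_zero]
    rw [map_add, htrunc0, add_zero, map_sum, map_sum, map_sum]
    refine Finset.sum_congr rfl fun i hi => ?_
    rw [Finset.mem_range] at hi
    obtain ⟨t, ht⟩ := st1_pow_surj hs m (c i)
    simp only at ht
    have hdec : WittVector.verschiebung^[i] (WittVector.teichmuller p (c i))
        = p ^ i • (WittVector.teichmuller p t) ^ p ^ (m - i) := by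
      have h1 : c i = (t ^ p ^ (m - i)) ^ p ^ i := by
        rw [← pow_mul, ← pow_add, Nat.sub_add_cancel hi.le, ht]
      rw [h1, ← st1_frob_teich i (t ^ p ^ (m - i)), st1_vf, map_pow]
    rw [hdec, map_nsmul, map_pow, map_nsmul, map_nsmul, map_pow, map_pow,
      nsmul_eq_mul, nsmul_eq_mul, Nat.cast_pow]
    refine st1_key hpm hI hi.le (Ideal.Quotient.eq.mp ?_)
    rw [hθ', hP2a]
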